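/- Let U ∈ H¹((0,G₁); L²(ω)³) be the weak limit of the zero-extensions Ũ_ε of the rescaled divergence-free velocities U_ε, where div_ε U_ε := ∂_{x₁}U_ε¹ + ∂_{x₂}U_ε² + (1/ε)∂_{y₃}U_ε³ = 0 and U_ε vanishes on the boundary. Then the third component of U vanishes: U³ = 0. In particular U = (Û, 0). -/

import Mathlib

open MeasureTheory Set Filter
open scoped Classical
noncomputable section

abbrev V3 := Fin 3 → ℝ
abbrev V2 := Fin 2 → ℝ

/-- Partial derivative in direction `i` of a scalar function on `ℝ³`. -/
def pd3 (i : Fin 3) (f : V3 → ℝ) (x : V3) : ℝ := fderiv ℝ f x (Pi.single i 1)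

/-- Partial derivative in direction `i` of a scalar function on `ℝ²`. -/
def pd2 (i : Fin 2) (f : V2 → ℝ) (x : V2) : ℝ := fderiv ℝ f x (Pi.single i 1)

/-- Squared euclidean norm of a vector field at a point. -/
def vnormSq (u : V3 → V3) (x : V3) : ℝ := ∑ i, (u x i) ^ 2

/-- Squared Frobenius norm of the gradient matrix of a vector field. -/
def gradSq (u : V3 → V3) (x : V3) : ℝ := ∑ i, ∑ j, (pd3 j (fun z => u z i) x) ^ 2

/-- Pointwise Frobenius norm `|∇u|`. -/
def gradNorm (u : V3 → V3) (x : V3) : ℝ := Real.sqrt (gradSq u x)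

/-- Pointwise inner product `∇u · ∇v` of two gradient matrices. -/
def gradInner (u v : V3 → V3) (x : V3) : ℝ :=
  ∑ i, ∑ j, pd3 j (fun z => u z i) x * pd3 j (fun z => v z i) x

/-- Divergence of a vector field. -/
def divg (u : V3 → V3) (x : V3) : ℝ := ∑ i, pd3 i (fun z => u z i) x

/-- The unit square `ω = (0,1)²`. -/
def omega2 : Set V2 := {x | 0 < x 0 ∧ x 0 < 1 ∧ 0 < x 1 ∧ x 1 < 1}

/-- Horizontal projection `x̂` of a point of `ℝ³`. -/
def hat (x : V3) : V2 := ![x 0, x 1]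

/-- The thin domain `Ω_ε = {(x̂,x₃) : x̂ ∈ ω, 0 < x₃ < εG(x̂/ε)}`. -/
def thinDom (ε : ℝ) (G : V2 → ℝ) : Set V3 :=
  {x | hat x ∈ omega2 ∧ 0 < x 2 ∧ x 2 < ε * G ![x 0 / ε, x 1 / ε]}

/-- The basic cell `Y* = {(ŷ,y₃) : ŷ ∈ (0,L₁)×(0,L₂), 0 < y₃ < G(ŷ)}`. -/
def Ystar (L1 L2 : ℝ) (G : V2 → ℝ) : Set V3 :=
  {y | 0 < y 0 ∧ y 0 < L1 ∧ 0 < y 1 ∧ y 1 < L2 ∧ 0 < y 2 ∧ y 2 < G ![y 0, y 1]}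

/-- `Y`-periodicity of `G` with periods `L₁, L₂`. -/
def Yper (L1 L2 : ℝ) (G : V2 → ℝ) : Prop :=
  ∀ (y : V2) (k : Fin 2 → ℤ), G (fun i => y i + (k i : ℝ) * ![L1, L2] i) = G y

/-- The `ε`-cell containing `x̂` is entirely included in `ω=(0,1)²` (that is, `x̂ ∈ ω^ε`). -/
def cellOK (ε L1 L2 : ℝ) (xh : V2) : Prop :=
  0 ≤ ⌊xh 0 / (ε * L1)⌋ ∧ 0 ≤ ⌊xh 1 / (ε * L2)⌋ ∧
    ε * L1 * ((⌊xh 0 / (ε * L1)⌋ : ℝ) + 1) ≤ 1 ∧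
    ε * L2 * ((⌊xh 1 / (ε * L2)⌋ : ℝ) + 1) ≤ 1

/-- The unfolding operator `T_ε(φ)(x̂,y) = φ(ε[x̂/ε]_L L + εŷ, εy₃)` on `ω^ε × Y*`, `0` on `Λ^ε × Y*`. -/
def Tunf (ε L1 L2 : ℝ) (φ : V3 → ℝ) (xh : V2) (y : V3) : ℝ :=
  if cellOK ε L1 L2 xh then
    φ ![ε * ((⌊xh 0 / (ε * L1)⌋ : ℝ) * L1 + y 0),
        ε * ((⌊xh 1 / (ε * L2)⌋ : ℝ) * L2 + y 1), ε * y 2]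
  else 0

/-- Union of the cells entirely included in `Ω_ε`. -/
def thinDom0 (ε L1 L2 : ℝ) (G : V2 → ℝ) : Set V3 :=
  {x ∈ thinDom ε G | cellOK ε L1 L2 (hat x)}

/-- The fixed-height domain `Ω = ω × (0, G₁)`. -/
def OmegaF (G1 : ℝ) : Set V3 := {x | hat x ∈ omega2 ∧ 0 < x 2 ∧ x 2 < G1}

/-- Matrix of partial derivatives in direction `i` of a vector field. -/
def pdV (i : Fin 3) (u : V3 → V3) (x : V3) : V3 := fun j => pd3 i (fun z => u z j) x

/-- Weak convergence in `L²(S)³` of a sequence of vector fields. -/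
def WeakL2V (S : Set V3) (fn : ℕ → V3 → V3) (f : V3 → V3) : Prop :=
  ∀ g : V3 → V3, (∀ i, MemLp (fun x => g x i) 2 (volume.restrict S)) →
    Tendsto (fun n => ∫ x in S, ∑ i, fn n x i * g x i) atTop
      (nhds (∫ x in S, ∑ i, f x i * g x i))


section AuxProofs

lemma omegaF_eq' (G1 : ℝ) : OmegaF G1 =
    {x : V3 | (0 < x 0 ∧ x 0 < 1 ∧ 0 < x 1 ∧ x 1 < 1) ∧ 0 < x 2 ∧ x 2 < G1} := by
  ext x
  simp [OmegaF, omega2, hat, Matrix.cons_val_zero, Matrix.cons_val_one, Matrix.head_cons]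

lemma isOpen_omegaF' (G1 : ℝ) : IsOpen (OmegaF G1) := by
  rw [omegaF_eq']
  have h1 : ∀ (i : Fin 3) (a : ℝ), IsOpen {x : V3 | a < x i} :=
    fun i a => isOpen_lt continuous_const (continuous_apply i)
  have h2 : ∀ (i : Fin 3) (a : ℝ), IsOpen {x : V3 | x i < a} :=
    fun i a => isOpen_lt (continuous_apply i) continuous_const
  exact ((((h1 0 0).and ((h2 0 1).and ((h1 1 0).and (h2 1 1))))).and ((h1 2 0).and (h2 2 G1)))

lemma isBounded_omegaF' (G1 : ℝ) : Bornology.IsBounded (OmegaF G1) := by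
  rw [omegaF_eq']
  apply Bornology.IsBounded.subset (Metric.isBounded_closedBall (x := (0:V3)) (r := max 1 G1))
  intro x hx
  simp only [Set.mem_setOf_eq] at hx
  obtain ⟨⟨h1, h2, h3, h4⟩, h5, h6⟩ := hx
  simp only [Metric.mem_closedBall, dist_zero_right]
  rw [pi_norm_le_iff_of_nonneg (le_trans zero_le_one (le_max_left 1 G1))]
  have hm1 : (1:ℝ) ≤ max 1 G1 := le_max_left _ _
  have hm2 : G1 ≤ max 1 G1 := le_max_right _ _
  intro i
  rw [Real.norm_eq_abs, abs_le]
  have hi : i = 0 ∨ i = 1 ∨ i = 2 := by omega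
  rcases hi with rfl | rfl | rfl <;> exact ⟨by linarith, by linarith⟩

end AuxProofs


lemma exists_antideriv (g : V3 → ℝ) (hg : ContDiff ℝ ((⊤ : ℕ∞) : WithTop ℕ∞) g)
    (hgs : HasCompactSupport g) :
    ∃ φ : V3 → ℝ, Differentiable ℝ φ ∧
      (∀ x, fderiv ℝ φ x (Pi.single 2 1) = g x) ∧ ∃ M, ∀ x, ‖φ x‖ ≤ M := by
  classical
  set e3 : V3 := Pi.single 2 1 with he3
  have he3app : ∀ s : ℝ, ∀ x : V3, (x + s • e3) 2 = x 2 + s := by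
    intro s x
    simp [he3, Pi.single_eq_same]
  obtain ⟨C, hC⟩ := hgs.exists_bound_of_continuous hg.continuous
  have hC0 : 0 ≤ C := le_trans (norm_nonneg _) (hC 0)
  have hgs' : HasCompactSupport (fderiv ℝ g) := hgs.fderiv ℝ
  have hg'cont : Continuous (fderiv ℝ g) := hg.continuous_fderiv (by simp)
  obtain ⟨C', hC'⟩ := hgs'.exists_bound_of_continuous hg'cont
  obtain ⟨r, hr⟩ := hgs.isBounded.subset_closedBall 0
  set R : ℝ := max r 0 with hR
  have hRsub : tsupport g ⊆ Metric.closedBall 0 R :=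
    hr.trans (Metric.closedBall_subset_closedBall (le_max_left _ _))
  have hR0 : 0 ≤ R := le_max_right _ _
  have hvanish : ∀ y : V3, R < |y 2| → g y = 0 ∧ fderiv ℝ g y = 0 := by
    intro y hy
    have habs : |y 2| ≤ ‖y‖ := by
      simpa [Real.norm_eq_abs] using norm_le_pi_norm y 2
    have hnm : y ∉ tsupport g := by
      intro hmem
      have := hRsub hmem
      simp only [Metric.mem_closedBall, dist_zero_right] at this
      linarith
    refine ⟨image_eq_zero_of_notMem_tsupport hnm, ?_⟩
    by_contra h
    exact hnm (support_fderiv_subset ℝ (by simpa [Function.mem_support] using h))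
  -- the antiderivative
  set φ : V3 → ℝ := fun x => ∫ s in Iic (0:ℝ), g (x + s • e3) with hφ
  have hFcont : ∀ x : V3, Continuous fun s : ℝ => g (x + s • e3) := by
    intro x
    exact hg.continuous.comp (by continuity)
  have hF'cont : ∀ x : V3, Continuous fun s : ℝ => fderiv ℝ g (x + s • e3) := by
    intro x
    exact hg'cont.comp (by continuity)
  have hsuppF : ∀ x : V3, ∀ s : ℝ, s ∉ Icc (-(x 2) - R) (-(x 2) + R) →
      g (x + s • e3) = 0 ∧ fderiv ℝ g (x + s • e3) = 0 := by
    intro x s hs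
    apply hvanish
    rw [he3app]
    simp only [mem_Icc, not_and_or, not_le] at hs
    rcases hs with hs | hs
    · rw [lt_abs]; right; linarith
    · rw [lt_abs]; left; linarith
  have hFint : ∀ x : V3, Integrable (fun s : ℝ => g (x + s • e3)) := by
    intro x
    apply (hFcont x).integrable_of_hasCompactSupport
    exact HasCompactSupport.intro isCompact_Icc (fun s hs => (hsuppF x s hs).1)
  have hF'int : ∀ x : V3, Integrable (fun s : ℝ => fderiv ℝ g (x + s • e3)) := by
    intro x
    apply (hF'cont x).integrable_of_hasCompactSupport
    exact HasCompactSupport.intro isCompact_Icc (fun s hs => (hsuppF x s hs).2)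
  have hdiffF : ∀ (s : ℝ) (x : V3),
      HasFDerivAt (fun z : V3 => g (z + s • e3)) (fderiv ℝ g (x + s • e3)) x := by
    intro s x
    have h1 : HasFDerivAt (fun z : V3 => z + s • e3) (ContinuousLinearMap.id ℝ V3) x :=
      (hasFDerivAt_id x).add_const _
    simpa [Function.comp_def] using ((hg.differentiable (by simp) (x + s • e3)).hasFDerivAt).comp x h1
  have hB : ∀ x₀ : V3, HasFDerivAt φ (∫ s in Iic (0:ℝ), fderiv ℝ g (x₀ + s • e3)) x₀ := by
    intro x₀
    apply hasFDerivAt_integral_of_dominated_of_fderiv_le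
      (F := fun (x : V3) (s : ℝ) => g (x + s • e3))
      (F' := fun (x : V3) (s : ℝ) => fderiv ℝ g (x + s • e3))
      (bound := Set.indicator (Icc (-(x₀ 2) - R - 1) 0) (fun _ => C'))
      (s := Metric.ball x₀ 1) (Metric.ball_mem_nhds x₀ one_pos)
    · exact Eventually.of_forall fun x => (hFcont x).aestronglyMeasurable
    · exact (hFint x₀).integrableOn
    · exact (hF'cont x₀).aestronglyMeasurable
    · filter_upwards [ae_restrict_mem measurableSet_Iic] with s hs
      intro x hx
      by_cases hmem : s ∈ Icc (-(x₀ 2) - R - 1) 0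
      · rw [Set.indicator_of_mem hmem]; exact hC' _
      · rw [Set.indicator_of_notMem hmem]
        have hs0 : s ≤ 0 := hs
        have hslt : s < -(x₀ 2) - R - 1 := by
          simp only [mem_Icc, not_and_or, not_le] at hmem
          rcases hmem with h | h
          · linarith
          · linarith
        have hx2 : |x 2 - x₀ 2| < 1 := by
          have := mem_ball_iff_norm.mp hx
          have h2 : |(x - x₀) 2| ≤ ‖x - x₀‖ := by
            simpa [Real.norm_eq_abs] using norm_le_pi_norm (x - x₀) 2
          simp only [Pi.sub_apply] at h2
          linarith
        have : (fderiv ℝ g) (x + s • e3) = 0 := by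
          apply (hvanish _ _).2
          rw [he3app]
          rw [lt_abs]; right
          have := abs_lt.mp hx2
          linarith
        simp [this]
    · apply Integrable.integrableOn
      rw [integrable_indicator_iff measurableSet_Icc]
      exact integrableOn_const measure_Icc_lt_top.ne
    · exact Eventually.of_forall fun s => fun x _ => hdiffF s x
  have hd3 : ∀ x : V3, fderiv ℝ φ x e3 = g x := by
    intro x
    rw [(hB x).fderiv]
    rw [ContinuousLinearMap.integral_apply (hF'int x).integrableOn]
    set ψ : ℝ → ℝ := fun s => g (x + s • e3) with hψ
    have hψc : ContDiff ℝ 1 ψ := by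
      apply (hg.of_le (mod_cast le_top)).comp
      exact contDiff_const.add (contDiff_id.smul contDiff_const)
    have hψs : HasCompactSupport ψ :=
      HasCompactSupport.intro isCompact_Icc (fun s hs => (hsuppF x s hs).1)
    have hder : ∀ s : ℝ, deriv ψ s = fderiv ℝ g (x + s • e3) e3 := by
      intro s
      have h2 : HasDerivAt (fun u : ℝ => x + u • e3) e3 s := by
        simpa using ((hasDerivAt_id s).smul_const e3).const_add x
      exact (((hg.differentiable (by simp) _).hasFDerivAt).comp_hasDerivAt s h2).deriv
    have hFTC := hψs.integral_Iic_deriv_eq hψc 0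
    have hcongr : ∫ s in Iic (0:ℝ), fderiv ℝ g (x + s • e3) e3
        = ∫ s in Iic (0:ℝ), deriv ψ s :=
      setIntegral_congr_fun measurableSet_Iic fun s _ => (hder s).symm
    rw [hcongr, hFTC, hψ]
    simp
  refine ⟨φ, fun x => (hB x).differentiableAt, hd3, C * (2 * R), ?_⟩
  intro x
  calc ‖φ x‖ ≤ ∫ s in Iic (0:ℝ), ‖g (x + s • e3)‖ := norm_integral_le_integral_norm _
    _ ≤ ∫ s in Iic (0:ℝ), Set.indicator (Icc (-(x 2) - R) (-(x 2) + R)) (fun _ => C) s := by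
        apply integral_mono_of_nonneg (Eventually.of_forall fun s => norm_nonneg _)
        · apply Integrable.integrableOn
          rw [integrable_indicator_iff measurableSet_Icc]
          exact integrableOn_const measure_Icc_lt_top.ne
        · apply Eventually.of_forall
          intro s
          by_cases hmem : s ∈ Icc (-(x 2) - R) (-(x 2) + R)
          · rw [Set.indicator_of_mem hmem]; exact hC _
          · rw [Set.indicator_of_notMem hmem]
            have h0 := (hsuppF x s hmem).1
            simp [h0]
    _ ≤ C * (2 * R) := by
        rw [integral_indicator measurableSet_Icc, setIntegral_const]
        have h1 : (volume.restrict (Iic (0:ℝ))) (Icc (-(x 2) - R) (-(x 2) + R)) ≤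
            ENNReal.ofReal (2 * R) := by
          rw [Measure.restrict_apply measurableSet_Icc]
          refine le_trans (measure_mono inter_subset_left) ?_
          rw [Real.volume_Icc]
          apply ENNReal.ofReal_le_ofReal
          ring_nf
          linarith
        calc ((volume.restrict (Iic (0:ℝ))) (Icc (-(x 2) - R) (-(x 2) + R))).toReal • C
            ≤ (ENNReal.ofReal (2 * R)).toReal • C := by
              apply smul_le_smul_of_nonneg_right _ hC0
              exact ENNReal.toReal_mono ENNReal.ofReal_ne_top h1
          _ ≤ C * (2 * R) := by
              rw [smul_eq_mul, ENNReal.toReal_ofReal (by linarith)]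
              ring_nf
              exact le_refl _

/-- if the rescaled velocities are divergence free in the sense
`ε∂_{x₁}Ũ_ε¹ + ε∂_{x₂}Ũ_ε² + ∂_{y₃}Ũ_ε³ = 0`, vanish on the boundary, and converge
weakly (together with their vertical derivatives) to `U` (resp. `Z`), then the third
component of the limit vanishes: `U³ = 0` a.e. in `Ω`, i.e. `U = (Û, 0)`. -/
theorem limit_third_component_vanishes
    (G1 : ℝ) (hG1 : 0 < G1)
    (εn : ℕ → ℝ) (hεpos : ∀ n, 0 < εn n) (hεto : Tendsto εn atTop (nhds 0))
    (Un : ℕ → V3 → V3)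
    (hreg : ∀ n, ContDiff ℝ 1 (Un n))
    (hsupp : ∀ n i, tsupport (fun x => Un n x i) ⊆ OmegaF G1)
    -- incompressibility: ε∂₁Ũ¹ + ε∂₂Ũ² + ∂₃Ũ³ = 0
    (hdiv : ∀ n, ∀ x ∈ OmegaF G1,
      εn n * pd3 0 (fun z => Un n z 0) x + εn n * pd3 1 (fun z => Un n z 1) x
        + pd3 2 (fun z => Un n z 2) x = 0)
    (U Z : V3 → V3)
    (hUmem : ∀ i, MemLp (fun x => U x i) 2 (volume.restrict (OmegaF G1)))
    (hZmem : ∀ i, MemLp (fun x => Z x i) 2 (volume.restrict (OmegaF G1)))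
    (hUconv : WeakL2V (OmegaF G1) Un U)
    (hZconv : WeakL2V (OmegaF G1) (fun n => pdV 2 (Un n)) Z)
    -- ε ∂_{x_i}Ũ_ε ⇀ 0, i = 1,2
    (hx1 : WeakL2V (OmegaF G1) (fun n x => εn n • pdV 0 (Un n) x) (fun _ => 0))
    (hx2 : WeakL2V (OmegaF G1) (fun n x => εn n • pdV 1 (Un n) x) (fun _ => 0)) :
    ∀ᵐ x ∂(volume.restrict (OmegaF G1)), U x 2 = 0 := by
  classical
  have hΩmeas : MeasurableSet (OmegaF G1) := (isOpen_omegaF' G1).measurableSet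
  have hΩbdd := isBounded_omegaF' G1
  haveI : IsFiniteMeasure (volume.restrict (OmegaF G1)) := by
    constructor
    rw [Measure.restrict_apply_univ]
    exact hΩbdd.measure_lt_top
  have hcomp : ∀ n i, ContDiff ℝ 1 (fun z => Un n z i) := fun n i => contDiff_pi.mp (hreg n) i
  have hcs : ∀ n i, HasCompactSupport (fun x => Un n x i) := by
    intro n i
    exact Metric.isCompact_of_isClosed_isBounded (isClosed_tsupport _) (hΩbdd.subset (hsupp n i))
  have hUn0 : ∀ n i x, x ∉ OmegaF G1 → Un n x i = 0 := fun n i x hx =>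
    image_eq_zero_of_notMem_tsupport (f := fun x => Un n x i) (fun h => hx (hsupp n i h))
  have hpd0 : ∀ n (i j : Fin 3) (x : V3), x ∉ OmegaF G1 → pd3 j (fun z => Un n z i) x = 0 := by
    intro n i j x hx
    have h0 : fderiv ℝ (fun z => Un n z i) x = 0 :=
      fderiv_of_notMem_tsupport (𝕜 := ℝ) (fun h => hx (hsupp n i h))
    simp [pd3, h0]
  have hpdcont : ∀ n (i j : Fin 3), Continuous fun x => pd3 j (fun z => Un n z i) x := by
    intro n i j
    have h1 : Continuous (fderiv ℝ (fun z => Un n z i)) := (hcomp n i).continuous_fderiv one_ne_zero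
    have h2 := (ContinuousLinearMap.apply ℝ ℝ ((Pi.single j 1 : V3))).continuous.comp h1
    exact h2
  have hpdcs : ∀ n (i j : Fin 3), HasCompactSupport fun x => pd3 j (fun z => Un n z i) x := by
    intro n i j
    apply HasCompactSupport.intro (hcs n i)
    intro x hx
    have h0 : fderiv ℝ (fun z => Un n z i) x = 0 := fderiv_of_notMem_tsupport (𝕜 := ℝ) hx
    simp [pd3, h0]
  have hIprod : ∀ (f h : V3 → ℝ), Continuous f → HasCompactSupport f → Continuous h →
      Integrable (fun x => f x * h x) volume := fun f h hf hfs hh =>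
    (hf.mul hh).integrable_of_hasCompactSupport hfs.mul_right
  have hU2int : Integrable (fun x => U x 2) (volume.restrict (OmegaF G1)) :=
    (hUmem 2).integrable one_le_two
  apply ae_eq_zero_of_integral_contDiff_smul_eq_zero hU2int.locallyIntegrable
  intro gt hgtsm hgtsupp
  obtain ⟨φ, hφdiff, hφd3, M, hφM⟩ := exists_antideriv gt hgtsm hgtsupp
  obtain ⟨Cg, hCg⟩ := hgtsupp.exists_bound_of_continuous hgtsm.continuous
  have hφcont : Continuous φ := hφdiff.continuous
  have hgmem : MemLp gt 2 (volume.restrict (OmegaF G1)) :=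
    MemLp.of_bound hgtsm.continuous.aestronglyMeasurable Cg (Eventually.of_forall hCg)
  have hφmem : MemLp φ 2 (volume.restrict (OmegaF G1)) :=
    MemLp.of_bound hφcont.aestronglyMeasurable M (Eventually.of_forall hφM)
  have hsum : ∀ (k : Fin 3) (v : V3) (c : ℝ), (∑ i, v i * (Pi.single k c : V3) i) = v k * c := by
    intro k v c
    fin_cases k <;> simp [Fin.sum_univ_three, Pi.single_apply]
  -- Limit 1 : ∫ Un³ gt → ∫ U³ gt
  have L1 : Tendsto (fun n => ∫ x in OmegaF G1, Un n x 2 * gt x) atTop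
      (nhds (∫ x in OmegaF G1, U x 2 * gt x)) := by
    have hmem : ∀ i, MemLp (fun x => (Pi.single (2:Fin 3) (gt x) : V3) i) 2
        (volume.restrict (OmegaF G1)) := by
      intro i
      rcases eq_or_ne i 2 with rfl | hi
      · simpa [Pi.single_eq_same] using hgmem
      · simp only [Pi.single_eq_of_ne hi]
        exact memLp_const 0
    have h := hUconv (fun x => Pi.single 2 (gt x)) hmem
    simpa [hsum] using h
  -- Limits for the horizontal derivative terms
  have hx1' : Tendsto (fun n => ∫ x in OmegaF G1,
      εn n * pd3 0 (fun z => Un n z 0) x * φ x) atTop (nhds 0) := by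
    have hmem : ∀ i, MemLp (fun x => (Pi.single (0:Fin 3) (φ x) : V3) i) 2
        (volume.restrict (OmegaF G1)) := by
      intro i
      rcases eq_or_ne i 0 with rfl | hi
      · simpa [Pi.single_eq_same] using hφmem
      · simp only [Pi.single_eq_of_ne hi]
        exact memLp_const 0
    have h := hx1 (fun x => Pi.single 0 (φ x)) hmem
    have hpt : ∀ n, (∫ x in OmegaF G1,
        ∑ i, (εn n • pdV 0 (Un n) x) i * (Pi.single (0:Fin 3) (φ x) : V3) i)
        = ∫ x in OmegaF G1, εn n * pd3 0 (fun z => Un n z 0) x * φ x := by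
      intro n
      apply integral_congr_ae
      apply Eventually.of_forall
      intro x
      simp [hsum, Pi.smul_apply, smul_eq_mul, pdV, mul_assoc, Fin.sum_univ_three,
        Pi.single_apply]
    have h0 : (∫ x in OmegaF G1,
        ∑ i, (fun _ : V3 => (0:V3)) x i * (Pi.single (0:Fin 3) (φ x) : V3) i) = 0 := by
      simp
    rw [h0] at h
    exact h.congr hpt
  have hx2' : Tendsto (fun n => ∫ x in OmegaF G1,
      εn n * pd3 1 (fun z => Un n z 1) x * φ x) atTop (nhds 0) := by
    have hmem : ∀ i, MemLp (fun x => (Pi.single (1:Fin 3) (φ x) : V3) i) 2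
        (volume.restrict (OmegaF G1)) := by
      intro i
      rcases eq_or_ne i 1 with rfl | hi
      · simpa [Pi.single_eq_same] using hφmem
      · simp only [Pi.single_eq_of_ne hi]
        exact memLp_const 0
    have h := hx2 (fun x => Pi.single 1 (φ x)) hmem
    have hpt : ∀ n, (∫ x in OmegaF G1,
        ∑ i, (εn n • pdV 1 (Un n) x) i * (Pi.single (1:Fin 3) (φ x) : V3) i)
        = ∫ x in OmegaF G1, εn n * pd3 1 (fun z => Un n z 1) x * φ x := by
      intro n
      apply integral_congr_ae
      apply Eventually.of_forall
      intro x
      simp [hsum, Pi.smul_apply, smul_eq_mul, pdV, mul_assoc, Fin.sum_univ_three,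
        Pi.single_apply]
    have h0 : (∫ x in OmegaF G1,
        ∑ i, (fun _ : V3 => (0:V3)) x i * (Pi.single (1:Fin 3) (φ x) : V3) i) = 0 := by
      simp
    rw [h0] at h
    exact h.congr hpt
  -- Splitting via incompressibility
  have hJ : ∀ n, ∫ x in OmegaF G1, pd3 2 (fun z => Un n z 2) x * φ x
      = -(∫ x in OmegaF G1, εn n * pd3 0 (fun z => Un n z 0) x * φ x)
        - ∫ x in OmegaF G1, εn n * pd3 1 (fun z => Un n z 1) x * φ x := by
    intro n
    have h1 : IntegrableOn (fun x => εn n * pd3 0 (fun z => Un n z 0) x * φ x)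
        (OmegaF G1) volume := by
      apply Integrable.integrableOn
      have h := (hIprod (fun x => pd3 0 (fun z => Un n z 0) x) φ
        (hpdcont n 0 0) (hpdcs n 0 0) hφcont).const_mul (εn n)
      simpa [mul_assoc] using h
    have h2 : IntegrableOn (fun x => εn n * pd3 1 (fun z => Un n z 1) x * φ x)
        (OmegaF G1) volume := by
      apply Integrable.integrableOn
      have h := (hIprod (fun x => pd3 1 (fun z => Un n z 1) x) φ
        (hpdcont n 1 1) (hpdcs n 1 1) hφcont).const_mul (εn n)
      simpa [mul_assoc] using h
    calc ∫ x in OmegaF G1, pd3 2 (fun z => Un n z 2) x * φ x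
        = ∫ x in OmegaF G1, -(εn n * pd3 0 (fun z => Un n z 0) x * φ x
            + εn n * pd3 1 (fun z => Un n z 1) x * φ x) := by
          apply setIntegral_congr_fun hΩmeas
          intro x hx
          have hc : pd3 2 (fun z => Un n z 2) x
              = -(εn n * pd3 0 (fun z => Un n z 0) x) - εn n * pd3 1 (fun z => Un n z 1) x := by
            linarith [hdiv n x hx]
          simp only [hc]; ring
      _ = -(∫ x in OmegaF G1, εn n * pd3 0 (fun z => Un n z 0) x * φ x)
            - ∫ x in OmegaF G1, εn n * pd3 1 (fun z => Un n z 1) x * φ x := by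
          rw [integral_neg, integral_add h1 h2]
          ring
  have L2 : Tendsto (fun n => ∫ x in OmegaF G1, pd3 2 (fun z => Un n z 2) x * φ x)
      atTop (nhds 0) := by
    have h := hx1'.neg.sub hx2'
    rw [neg_zero, sub_zero] at h
    exact h.congr (fun n => (hJ n).symm)
  -- Integration by parts
  have key : ∀ n, ∫ x in OmegaF G1, Un n x 2 * gt x
      = -∫ x in OmegaF G1, pd3 2 (fun z => Un n z 2) x * φ x := by
    intro n
    have e1 : ∫ x in OmegaF G1, Un n x 2 * gt x = ∫ x, Un n x 2 * gt x :=
      setIntegral_eq_integral_of_forall_compl_eq_zero fun x hx => by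
        rw [hUn0 n 2 x hx, zero_mul]
    have e2 : ∫ x in OmegaF G1, pd3 2 (fun z => Un n z 2) x * φ x
        = ∫ x, pd3 2 (fun z => Un n z 2) x * φ x :=
      setIntegral_eq_integral_of_forall_compl_eq_zero fun x hx => by
        rw [hpd0 n 2 2 x hx, zero_mul]
    rw [e1, e2]
    have hf : Differentiable ℝ (fun z => Un n z 2) := (hcomp n 2).differentiable one_ne_zero
    have hrw : (fun x => Un n x 2 * fderiv ℝ φ x (Pi.single 2 1))
        = fun x => Un n x 2 * gt x := funext fun x => by rw [hφd3]
    have i1 : Integrable (fun x =>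
        fderiv ℝ (fun z => Un n z 2) x (Pi.single 2 1) * φ x) volume :=
      hIprod (fun x => pd3 2 (fun z => Un n z 2) x) φ (hpdcont n 2 2) (hpdcs n 2 2) hφcont
    have i2 : Integrable (fun x => Un n x 2 * fderiv ℝ φ x (Pi.single 2 1)) volume := by
      rw [hrw]
      exact hIprod (fun x => Un n x 2) gt (hcomp n 2).continuous (hcs n 2) hgtsm.continuous
    have i3 : Integrable (fun x => Un n x 2 * φ x) volume :=
      hIprod (fun x => Un n x 2) φ (hcomp n 2).continuous (hcs n 2) hφcont
    have hIBP := integral_mul_fderiv_eq_neg_fderiv_mul_of_integrable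
      (v := (Pi.single 2 1 : V3)) i1 i2 i3 (fun x _ => hf x) (fun x _ => hφdiff x)
    rw [hrw] at hIBP
    rw [hIBP]
    rfl
  have L1' : Tendsto (fun n => ∫ x in OmegaF G1, Un n x 2 * gt x) atTop (nhds 0) := by
    have h := L2.neg
    rw [neg_zero] at h
    exact h.congr (fun n => (key n).symm)
  have hzero : ∫ x in OmegaF G1, U x 2 * gt x = 0 := tendsto_nhds_unique L1 L1'
  have hfin : (∫ x, gt x • U x 2 ∂(volume.restrict (OmegaF G1)))
      = ∫ x in OmegaF G1, U x 2 * gt x := by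
    apply integral_congr_ae
    apply Eventually.of_forall
    intro x
    simp [smul_eq_mul, mul_comm]
  rw [hfin, hzero]
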